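/- Let Σ be a 2(n+1)×2(n+1) complex Hermitian matrix and Ω₁, Ω_n the standard symplectic forms on 2 and 2n dimensions respectively, and let M be a fixed 2×2 positive semidefinite Hermitian matrix. The feasible set {Z ∈ Herm(ℂ^{2×2}) : Z ≥ (iħ/2)Ω₁ and Σ + diag(0, (iħ/2)Ω_n) ≥ diag(Z, 0)} is convex and closed, and the function Z ↦ tr(M Z) is real-valued and bounded above on it whenever Σ + (iħ/2)Ω_{n+1} ≥ 0. -/

import Mathlib

open Matrix
open scoped ComplexOrder

lemma psd_diag_nonneg {m : Type*} [Fintype m] [DecidableEq m] {A : Matrix m m ℂ}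
    (hA : A.PosSemidef) (i : m) : 0 ≤ A i i := by
  simpa [dotProduct, mulVec, Pi.single_apply, Finset.sum_ite_eq] using hA.dotProduct_mulVec_nonneg (Pi.single i 1)

lemma psd_trace_nonneg {m : Type*} [Fintype m] [DecidableEq m] {A : Matrix m m ℂ}
    (hA : A.PosSemidef) : 0 ≤ A.trace := by
  exact Finset.sum_nonneg fun i _ => psd_diag_nonneg hA i

open scoped MatrixOrder Matrix.Norms.L2Operator in
lemma trace_mul_psd_nonneg {m : Type*} [Fintype m] [DecidableEq m] {M X : Matrix m m ℂ}
    (hM : M.PosSemidef) (hX : X.PosSemidef) : 0 ≤ (M * X).trace := by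
  have hS : (CFC.sqrt M).PosSemidef := (CFC.sqrt_nonneg M).posSemidef
  have key : (CFC.sqrt M * X * CFC.sqrt M).trace = (M * X).trace := by
    rw [trace_mul_cycle, CFC.sqrt_mul_sqrt_self M hM.nonneg]
  rw [← key]
  refine psd_trace_nonneg ?_
  have := hX.mul_mul_conjTranspose_same (CFC.sqrt M)
  rwa [hS.1] at this

lemma psd_smul_real {m : Type*} [Fintype m] {c : ℝ} (hc : 0 ≤ c)
    {A : Matrix m m ℂ} (hA : A.PosSemidef) : (c • A).PosSemidef := by
  refine posSemidef_iff_dotProduct_mulVec.mpr ⟨?_, ?_⟩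
  · have := hA.1
    unfold Matrix.IsHermitian at *
    rw [conjTranspose_smul, star_trivial, this]
  · intro x
    rw [smul_mulVec, dotProduct_smul]
    have h1 : (0:ℂ) ≤ (c:ℂ) := by exact_mod_cast Complex.zero_le_real.mpr hc
    calc (0:ℂ) ≤ (c:ℂ) * (star x ⬝ᵥ A *ᵥ x) := mul_nonneg h1 (hA.dotProduct_mulVec_nonneg x)
    _ = c • (star x ⬝ᵥ A *ᵥ x) := (Complex.real_smul).symm

lemma isClosed_posSemidef (m : Type*) [Fintype m] :
    IsClosed {A : Matrix m m ℂ | A.PosSemidef} := by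
  have hrep : {A : Matrix m m ℂ | A.PosSemidef} =
      {A : Matrix m m ℂ | Aᴴ = A} ∩ ⋂ v : m → ℂ, {A | 0 ≤ star v ⬝ᵥ A *ᵥ v} := by
    ext A
    simp only [Set.mem_setOf_eq, Set.mem_inter_iff, Set.mem_iInter]
    exact posSemidef_iff_dotProduct_mulVec
  rw [hrep]
  refine (isClosed_eq (continuous_id.matrix_conjTranspose) continuous_id).inter
    (isClosed_iInter fun v => ?_)
  have hc : Continuous fun A : Matrix m m ℂ => star v ⬝ᵥ A *ᵥ v :=
    (continuous_const).dotProduct (continuous_id.matrix_mulVec continuous_const)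
  have hrep2 : {A : Matrix m m ℂ | 0 ≤ star v ⬝ᵥ A *ᵥ v} =
      {A : Matrix m m ℂ | 0 ≤ (star v ⬝ᵥ A *ᵥ v).re} ∩
      {A : Matrix m m ℂ | (star v ⬝ᵥ A *ᵥ v).im = 0} := by
    ext A
    simp only [Set.mem_setOf_eq, Set.mem_inter_iff, Complex.le_def, Complex.zero_re,
      Complex.zero_im]
    tauto
  rw [hrep2]
  exact (isClosed_le continuous_const (Complex.continuous_re.comp hc)).inter
    (isClosed_eq (Complex.continuous_im.comp hc) continuous_const)

/-- The standard symplectic form `Ω_k = ⊕_{i=1}^k [[0,1],[-1,0]]` on `ℝ^{2k}`. -/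
def symplecticForm (k : ℕ) : Matrix (Fin (2 * k)) (Fin (2 * k)) ℝ :=
  Matrix.of fun i j =>
    if i.val + 1 = j.val ∧ i.val % 2 = 0 then 1
    else if j.val + 1 = i.val ∧ j.val % 2 = 0 then -1
    else 0

/-- The feasible set of the effective-squeezing SDP: Hermitian `2×2` matrices `Z`
with `Z ≥ (iħ/2)Ω₁` and `Σ + diag(0, (iħ/2)Ω_n) ≥ diag(Z, 0)`. -/
def sdpFeasibleSet (n : ℕ) (hbar : ℝ)
    (Sigma : Matrix (Fin 2 ⊕ Fin (2 * n)) (Fin 2 ⊕ Fin (2 * n)) ℂ) :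
    Set (Matrix (Fin 2) (Fin 2) ℂ) :=
  {Z | Z.IsHermitian ∧
    (Z - (hbar / 2) • (Complex.I • (!![(0 : ℝ), 1; -1, 0]).map Complex.ofReal)).PosSemidef ∧
    (Sigma +
        Matrix.fromBlocks 0 0 0
          ((hbar / 2) • (Complex.I • (symplecticForm n).map Complex.ofReal)) -
        Matrix.fromBlocks Z 0 0 0).PosSemidef}

/-- The feasible set of the SDP is convex and closed; the objective
`Z ↦ tr(M Z)` is real-valued on it, and it is bounded above on the feasible set whenever
`Σ + (iħ/2)Ω_{n+1} ⪰ 0`. -/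
theorem sdp_feasible_set_properties (n : ℕ) (hbar : ℝ) (hbar_pos : 0 < hbar)
    (Sigma : Matrix (Fin 2 ⊕ Fin (2 * n)) (Fin 2 ⊕ Fin (2 * n)) ℂ)
    (hSigma : Sigma.IsHermitian)
    (M : Matrix (Fin 2) (Fin 2) ℂ) (hM : M.PosSemidef) :
    Convex ℝ (sdpFeasibleSet n hbar Sigma) ∧
    IsClosed (sdpFeasibleSet n hbar Sigma) ∧
    (∀ Z ∈ sdpFeasibleSet n hbar Sigma, ((M * Z).trace).im = 0) ∧
    ((Sigma + (hbar / 2) • (Complex.I •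
        (Matrix.fromBlocks !![(0 : ℝ), 1; -1, 0] 0 0 (symplecticForm n)).map
          Complex.ofReal)).PosSemidef →
      BddAbove ((fun Z => ((M * Z).trace).re) '' sdpFeasibleSet n hbar Sigma)) := by
  set A : Matrix (Fin 2) (Fin 2) ℂ :=
    (hbar / 2) • (Complex.I • (!![(0 : ℝ), 1; -1, 0]).map Complex.ofReal) with hA
  set F : Matrix (Fin 2 ⊕ Fin (2 * n)) (Fin 2 ⊕ Fin (2 * n)) ℂ :=
    Matrix.fromBlocks 0 0 0
      ((hbar / 2) • (Complex.I • (symplecticForm n).map Complex.ofReal)) with hF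
  refine ⟨?_, ?_, ?_, ?_⟩
  · -- Convexity
    intro Z₁ h₁ Z₂ h₂ a b ha hb hab
    obtain ⟨hH₁, hP₁, hQ₁⟩ := h₁
    obtain ⟨hH₂, hP₂, hQ₂⟩ := h₂
    refine ⟨?_, ?_, ?_⟩
    · show (a • Z₁ + b • Z₂)ᴴ = _
      rw [conjTranspose_add, conjTranspose_smul, conjTranspose_smul, star_trivial,
        star_trivial, hH₁, hH₂]
    · have e : a • (Z₁ - A) + b • (Z₂ - A) = a • Z₁ + b • Z₂ - A := by
        rw [smul_sub, smul_sub, sub_add_sub_comm, ← add_smul, hab, one_smul]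
      exact e ▸ (psd_smul_real ha hP₁).add (psd_smul_real hb hP₂)
    · have e : a • (Sigma + F - Matrix.fromBlocks Z₁ 0 0 0) +
          b • (Sigma + F - Matrix.fromBlocks Z₂ 0 0 0) =
          Sigma + F - Matrix.fromBlocks (a • Z₁ + b • Z₂) 0 0 0 := by
        rw [smul_sub, smul_sub, sub_add_sub_comm, ← add_smul, hab, one_smul,
          Matrix.fromBlocks_smul, Matrix.fromBlocks_smul, Matrix.fromBlocks_add]
        simp
      exact e ▸ (psd_smul_real ha hQ₁).add (psd_smul_real hb hQ₂)
  · -- Closedness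
    have hset : sdpFeasibleSet n hbar Sigma =
        ({Z : Matrix (Fin 2) (Fin 2) ℂ | Zᴴ = Z} ∩
        ((fun Z : Matrix (Fin 2) (Fin 2) ℂ => Z - A) ⁻¹' {W | W.PosSemidef})) ∩
        ((fun Z : Matrix (Fin 2) (Fin 2) ℂ => Sigma + F - Matrix.fromBlocks Z 0 0 0) ⁻¹'
          {W | W.PosSemidef}) := by
      ext Z
      simp only [sdpFeasibleSet, Set.mem_setOf_eq, Set.mem_inter_iff, Set.mem_preimage]
      exact ⟨fun ⟨h1, h2, h3⟩ => ⟨⟨h1, h2⟩, h3⟩, fun ⟨⟨h1, h2⟩, h3⟩ => ⟨h1, h2, h3⟩⟩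
    rw [hset]
    refine ((isClosed_eq (continuous_id.matrix_conjTranspose) continuous_id).inter ?_).inter ?_
    · exact (isClosed_posSemidef _).preimage (continuous_id.sub continuous_const)
    · exact (isClosed_posSemidef _).preimage (continuous_const.sub
        (Continuous.matrix_fromBlocks continuous_id continuous_const continuous_const
          continuous_const))
  · -- Real-valued
    intro Z hZ
    obtain ⟨hH, -, -⟩ := hZ
    have h : star (M * Z).trace = (M * Z).trace := by
      rw [← trace_conjTranspose, conjTranspose_mul, hM.1, hH, trace_mul_comm]
    have h2 := congrArg Complex.im h
    simp only [Complex.star_def, Complex.conj_im] at h2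
    linarith
  · -- Boundedness
    intro _h
    refine ⟨(M * Sigma.toBlocks₁₁).trace.re, ?_⟩
    rintro x ⟨Z, hZ, rfl⟩
    obtain ⟨-, -, hQ⟩ := hZ
    have hsub := hQ.submatrix Sum.inl
    have hb : ((Sigma + F - Matrix.fromBlocks Z 0 0 0).submatrix Sum.inl Sum.inl) =
        Sigma.toBlocks₁₁ - Z := by
      ext i j
      simp [hF, toBlocks₁₁, Matrix.sub_apply, Matrix.add_apply]
    rw [hb] at hsub
    have h0 := trace_mul_psd_nonneg hM hsub
    rw [Matrix.mul_sub, trace_sub] at h0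
    have h1 := (Complex.le_def.mp h0).1
    simp only [Complex.sub_re, Complex.zero_re] at h1
    linarith
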